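/- With b₀(v), b₁(v) defined by the trigonometric fitting equations (2b₀(v) + b₁(v) = 1 and 2(cos v − 1) = −v²(2b₀(v)cos v + b₁(v))), the limit as v → 0 exists and equals (b₀, b₁) = (1/12, 5/6), the classical coefficients. -/

import Mathlib

open Filter

open Filter

-- helper: continuity-based tendsto on punctured nbhd
lemma tendsto_cont {f : ℝ → ℝ} (hf : Continuous f) {l : ℝ} (h : f 0 = l) :
    Tendsto f (nhdsWithin (0:ℝ) {v : ℝ | v ≠ 0}) (nhds l) :=
  tendsto_nhdsWithin_of_tendsto_nhds (h ▸ hf.tendsto 0)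

lemma lim4 : Tendsto (fun v : ℝ => (2 * Real.sin v) / (24 * v)) (nhdsWithin 0 {v : ℝ | v ≠ 0}) (nhds (1/12)) := by
  apply HasDerivAt.lhopital_zero_nhdsNE
    (f' := fun v => 2 * Real.cos v) (g' := fun _ => (24:ℝ))
  · exact Eventually.of_forall fun v => (Real.hasDerivAt_sin v).const_mul 2
  · exact Eventually.of_forall fun v => by simpa using (hasDerivAt_id v).const_mul (24:ℝ)
  · exact Eventually.of_forall fun v => by norm_num
  · exact tendsto_cont (by continuity) (by simp)
  · exact tendsto_cont (by continuity) (by simp)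
  · exact tendsto_cont (by continuity) (by norm_num)

lemma lim3 : Tendsto (fun v : ℝ => (2 - 2 * Real.cos v) / (12 * v ^ 2)) (nhdsWithin 0 {v : ℝ | v ≠ 0}) (nhds (1/12)) := by
  apply HasDerivAt.lhopital_zero_nhdsNE
    (f' := fun v => 2 * Real.sin v) (g' := fun v => 24 * v)
  · exact Eventually.of_forall fun v => by
      exact ((hasDerivAt_const v (2:ℝ)).sub ((Real.hasDerivAt_cos v).const_mul 2)).congr_deriv (by ring)
  · exact Eventually.of_forall fun v => by
      have h := (hasDerivAt_pow 2 v).const_mul (12:ℝ)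
      have e : (12:ℝ) * (((2:ℕ):ℝ) * v ^ (2-1)) = 24 * v := by push_cast; ring
      rw [e] at h
      simpa [mul_comm] using h
  · filter_upwards [self_mem_nhdsWithin] with v hv
    simpa using hv
  · exact tendsto_cont (by continuity) (by simp)
  · exact tendsto_cont (by continuity) (by simp)
  · exact lim4

lemma lim2 : Tendsto (fun v : ℝ => (2 * v - 2 * Real.sin v) / (4 * v ^ 3)) (nhdsWithin 0 {v : ℝ | v ≠ 0}) (nhds (1/12)) := by
  apply HasDerivAt.lhopital_zero_nhdsNE
    (f' := fun v => 2 - 2 * Real.cos v) (g' := fun v => 12 * v ^ 2)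
  · exact Eventually.of_forall fun v => by
      exact (((hasDerivAt_id v).const_mul (2:ℝ)).sub ((Real.hasDerivAt_sin v).const_mul 2)).congr_deriv (by ring)
  · exact Eventually.of_forall fun v => by
      have h := (hasDerivAt_pow 3 v).const_mul (4:ℝ)
      have e : (4:ℝ) * (((3:ℕ):ℝ) * v ^ (3-1)) = 12 * v ^ 2 := by push_cast; ring
      rw [e] at h
      simpa [mul_comm] using h
  · filter_upwards [self_mem_nhdsWithin] with v hv
    have : (v:ℝ) ≠ 0 := hv
    positivity
  · exact tendsto_cont (by continuity) (by simp)
  · exact tendsto_cont (by continuity) (by simp)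
  · exact lim3

lemma lim1 : Tendsto (fun v : ℝ => (v ^ 2 - 2 + 2 * Real.cos v) / v ^ 4) (nhdsWithin 0 {v : ℝ | v ≠ 0}) (nhds (1/12)) := by
  apply HasDerivAt.lhopital_zero_nhdsNE
    (f' := fun v => 2 * v - 2 * Real.sin v) (g' := fun v => 4 * v ^ 3)
  · exact Eventually.of_forall fun v => by
      exact (((hasDerivAt_pow 2 v).sub (hasDerivAt_const v (2:ℝ))).add
        ((Real.hasDerivAt_cos v).const_mul 2)).congr_deriv (by norm_num; ring)
  · exact Eventually.of_forall fun v => by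
      simpa [mul_comm] using hasDerivAt_pow 4 v
  · filter_upwards [self_mem_nhdsWithin] with v hv
    have : (v:ℝ) ≠ 0 := hv
    positivity
  · exact tendsto_cont (by continuity) (by simp)
  · exact tendsto_cont (by continuity) (by simp)
  · exact lim2

lemma limB2 : Tendsto (fun v : ℝ => Real.sin v / (2 * v)) (nhdsWithin 0 {v : ℝ | v ≠ 0}) (nhds (1/2)) := by
  apply HasDerivAt.lhopital_zero_nhdsNE
    (f' := fun v => Real.cos v) (g' := fun _ => (2:ℝ))
  · exact Eventually.of_forall fun v => Real.hasDerivAt_sin v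
  · exact Eventually.of_forall fun v => by simpa using (hasDerivAt_id v).const_mul (2:ℝ)
  · exact Eventually.of_forall fun v => by norm_num
  · exact tendsto_cont (by continuity) (by simp)
  · exact tendsto_cont (by continuity) (by simp)
  · exact tendsto_cont (by continuity) (by norm_num)

lemma limB : Tendsto (fun v : ℝ => (1 - Real.cos v) / v ^ 2) (nhdsWithin 0 {v : ℝ | v ≠ 0}) (nhds (1/2)) := by
  apply HasDerivAt.lhopital_zero_nhdsNE
    (f' := fun v => Real.sin v) (g' := fun v => 2 * v)
  · exact Eventually.of_forall fun v => by
      exact ((hasDerivAt_const v (1:ℝ)).sub (Real.hasDerivAt_cos v)).congr_deriv (by ring)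
  · exact Eventually.of_forall fun v => by
      simpa [mul_comm] using hasDerivAt_pow 2 v
  · filter_upwards [self_mem_nhdsWithin] with v hv
    simpa using hv
  · exact tendsto_cont (by continuity) (by simp)
  · exact tendsto_cont (by continuity) (by simp)
  · exact limB2

/-- Theorem 2 instance: the trigonometrically fitted coefficients tend to the
classical coefficients `(1/12, 5/6)` as the fitted frequency tends to zero. -/
theorem trig_fitted_tends_to_classical (b₀ b₁ : ℝ → ℝ)
    (hfit : ∀ v : ℝ, v ≠ 0 →
      2 * (Real.cos v - 1) = -v ^ 2 * (2 * b₀ v * Real.cos v + b₁ v))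
    (horder : ∀ v : ℝ, v ≠ 0 → 2 * b₀ v + b₁ v = 1) :
    Tendsto (fun v : ℝ => (b₀ v, b₁ v)) (nhdsWithin 0 {v : ℝ | v ≠ 0})
      (nhds ((1 : ℝ) / 12, (5 : ℝ) / 6)) := by
  have hball : Metric.ball (0:ℝ) 1 ∈ nhdsWithin (0:ℝ) {v : ℝ | v ≠ 0} :=
    nhdsWithin_le_nhds (Metric.ball_mem_nhds 0 one_pos)
  have hcos : ∀ v : ℝ, v ≠ 0 → v ∈ Metric.ball (0:ℝ) 1 → Real.cos v ≠ 1 := by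
    intro v hv hb h1
    have habs : |v| < 1 := by simpa [Real.dist_eq] using hb
    have hpi := Real.pi_gt_three
    rw [abs_lt] at habs
    have := (Real.cos_eq_one_iff_of_lt_of_lt (by linarith [habs.1]) (by linarith [habs.2])).1 h1
    exact hv this
  have key : ∀ᶠ v in nhdsWithin (0:ℝ) {v : ℝ | v ≠ 0},
      b₀ v = ((v ^ 2 - 2 + 2 * Real.cos v) / v ^ 4) / (2 * ((1 - Real.cos v) / v ^ 2)) := by
    filter_upwards [self_mem_nhdsWithin, hball] with v hv hb
    have hv' : v ≠ 0 := hv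
    have hc : (1 : ℝ) - Real.cos v ≠ 0 := sub_ne_zero.mpr (Ne.symm (hcos v hv' hb))
    have h1 := hfit v hv'
    have h2 := horder v hv'
    have hb1 : b₁ v = 1 - 2 * b₀ v := by linarith
    rw [hb1] at h1
    field_simp
    ring_nf
    ring_nf at h1
    nlinarith [sq_nonneg v, h1]
  have hd : Tendsto (fun v : ℝ => 2 * ((1 - Real.cos v) / v ^ 2))
      (nhdsWithin (0:ℝ) {v : ℝ | v ≠ 0}) (nhds 1) := by
    have := limB.const_mul (2:ℝ)
    norm_num at this
    exact this
  have hb0 : Tendsto b₀ (nhdsWithin (0:ℝ) {v : ℝ | v ≠ 0}) (nhds (1/12)) := by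
    have := (lim1.div hd one_ne_zero)
    norm_num at this
    exact this.congr' (by filter_upwards [key] with v h using h.symm)
  have hb1 : Tendsto b₁ (nhdsWithin (0:ℝ) {v : ℝ | v ≠ 0}) (nhds (5/6)) := by
    have h := (tendsto_const_nhds (x := (1:ℝ))).sub (hb0.const_mul 2)
    norm_num at h
    refine h.congr' ?_
    filter_upwards [self_mem_nhdsWithin] with v hv
    have := horder v hv
    linarith
  exact hb0.prodMk_nhds hb1
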